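/- Under the mixture model, let W be the L×L matrix with entries W_{ln} = E[(1/D) Σ_{k=1}^D a_l(k) a_n(k)], and let P be the L×J matrix with entries P_{lj} = p_j(l). Then W = P Pᵀ + ΔW, where ΔW is the diagonal L×L matrix with diagonal entries ΔW_{ll} = 1 − Σ_{j=1}^J p_j(l)². -/

import Mathlib

open MeasureTheory ProbabilityTheory

/-- The correlation matrix `W` decomposes as `W = P Pᵀ + ΔW` with
`ΔW` diagonal with entries `1 - ∑ⱼ p_j(l)²`. -/
theorem correlation_matrix_decomposition
    {Ω : Type*} [MeasurableSpace Ω] (μ : Measure Ω) [IsProbabilityMeasure μ]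
    (J L D : ℕ) (hJ : 0 < J) (hL : 0 < L) (hD : 0 < D)
    -- hidden sources
    (h : Fin J → Fin D → Ω → ℝ)
    (hmeas : ∀ j k, Measurable (h j k))
    -- all moments of the sources are finite
    (hmom : ∀ j k (n : ℕ), Integrable (fun ω => |h j k ω| ^ n) μ)
    -- second-moment structure: E[h_i(k) h_j(k')] = δ_{ij} δ_{kk'}
    (hcorr : ∀ (i j : Fin J) (k k' : Fin D),
      ∫ ω, h i k ω * h j k' ω ∂μ = if i = j ∧ k = k' then 1 else 0)
    -- indicators
    (I : Fin J → Fin L → Fin D → Ω → ℝ)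
    (hImeas : ∀ j l k, Measurable (I j l k))
    (hI01 : ∀ j l k ω, I j l k ω = 0 ∨ I j l k ω = 1)
    (hIsum : ∀ l k ω, ∑ j, I j l k ω = 1)
    -- probabilities
    (p : Fin J → Fin L → ℝ)
    (hp0 : ∀ j l, 0 ≤ p j l) (hp1 : ∀ l, ∑ j, p j l = 1)
    (hEI : ∀ j l k, ∫ ω, I j l k ω ∂μ = p j l)
    -- the indicator families associated with distinct pairs (l,k) are mutually independent
    (hIndepI : iIndepFun
      (fun (lk : Fin L × Fin D) ω => fun j => I j lk.1 lk.2 ω) μ)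
    -- the collection of all indicators is independent of the collection of all sources
    (hIndepIh : IndepFun
      (fun ω => fun jlk : Fin J × Fin L × Fin D => I jlk.1 jlk.2.1 jlk.2.2 ω)
      (fun ω => fun jk : Fin J × Fin D => h jk.1 jk.2 ω) μ)
    -- observations
    (a : Fin L → Fin D → Ω → ℝ)
    (ha : ∀ l k ω, a l k ω = ∑ j, I j l k ω * h j k ω)
    (W : Matrix (Fin L) (Fin L) ℝ)
    (hW : ∀ l n, W l n = ∫ ω, (1 / (D : ℝ)) * ∑ k, a l k ω * a n k ω ∂μ)
    (P : Matrix (Fin L) (Fin J) ℝ)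
    (hP : ∀ l j, P l j = p j l) :
    W = P * P.transpose + Matrix.diagonal (fun l => 1 - ∑ j, (p j l) ^ 2) := by
  -- indicators are bounded by 1 in absolute value
  have hIb : ∀ j l k ω, |I j l k ω| ≤ 1 := by
    intro j l k ω; rcases hI01 j l k ω with h0 | h0 <;> simp [h0]
  -- products of sources are integrable
  have hhi : ∀ i j k, Integrable (fun ω => h i k ω * h j k ω) μ := by
    intro i j k
    refine Integrable.mono' ((hmom i k 2).add (hmom j k 2))
      ((hmeas i k).mul (hmeas j k)).aestronglyMeasurable (Filter.Eventually.of_forall ?_)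
    intro ω
    simp only [Real.norm_eq_abs, Pi.add_apply, abs_mul]
    nlinarith [sq_nonneg (|h i k ω| - |h j k ω|), abs_nonneg (h i k ω), abs_nonneg (h j k ω)]
  -- indicators (and products of two indicators) are integrable
  have hIint : ∀ i j l n k, Integrable (fun ω => I i l k ω * I j n k ω) μ := by
    intro i j l n k
    refine Integrable.mono' (integrable_const 1)
      ((hImeas i l k).mul (hImeas j n k)).aestronglyMeasurable (Filter.Eventually.of_forall ?_)
    intro ω
    have h1 := hIb i l k ω; have h2 := hIb j n k ω
    simp only [Real.norm_eq_abs, abs_mul]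
    nlinarith [abs_nonneg (I i l k ω), abs_nonneg (I j n k ω)]
  -- the individual terms in the product expansion are integrable
  have hint : ∀ i j l n k,
      Integrable (fun ω => I i l k ω * I j n k ω * (h i k ω * h j k ω)) μ := by
    intro i j l n k
    refine Integrable.mono' (hhi i j k).abs
      (((hImeas i l k).mul (hImeas j n k)).mul
        ((hmeas i k).mul (hmeas j k))).aestronglyMeasurable (Filter.Eventually.of_forall ?_)
    intro ω
    have h1 := hIb i l k ω; have h2 := hIb j n k ω
    simp only [Real.norm_eq_abs, abs_mul, abs_abs]
    have hnn : 0 ≤ |h i k ω| * |h j k ω| := by positivity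
    have hII : |I i l k ω| * |I j n k ω| ≤ 1 := by
      nlinarith [abs_nonneg (I i l k ω), abs_nonneg (I j n k ω)]
    nlinarith [mul_nonneg (sub_nonneg.mpr hII) hnn]
  -- independence of indicator-products from source-products
  have key1 : ∀ (i j : Fin J) (l n : Fin L) (k : Fin D),
      ∫ ω, I i l k ω * I j n k ω * (h i k ω * h j k ω) ∂μ
        = (∫ ω, I i l k ω * I j n k ω ∂μ) * (∫ ω, h i k ω * h j k ω ∂μ) := by
    intro i j l n k
    have hφ : Measurable (fun v : Fin J × Fin L × Fin D → ℝ => v (i, l, k) * v (j, n, k)) :=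
      (measurable_pi_apply _).mul (measurable_pi_apply _)
    have hψ : Measurable (fun v : Fin J × Fin D → ℝ => v (i, k) * v (j, k)) :=
      (measurable_pi_apply _).mul (measurable_pi_apply _)
    have hind : IndepFun (fun ω => I i l k ω * I j n k ω)
        (fun ω => h i k ω * h j k ω) μ := hIndepIh.comp hφ hψ
    exact hind.integral_mul_eq_mul_integral (hIint i j l n k).aestronglyMeasurable
      (hhi i j k).aestronglyMeasurable
  -- expected value of a product of two indicators
  have keyII : ∀ (j : Fin J) (l n : Fin L) (k : Fin D),
      ∫ ω, I j l k ω * I j n k ω ∂μ = if l = n then p j l else p j l * p j n := by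
    intro j l n k
    by_cases hln : l = n
    · subst hln
      simp only [if_true]
      have : (fun ω => I j l k ω * I j l k ω) = fun ω => I j l k ω := by
        funext ω; rcases hI01 j l k ω with h0 | h0 <;> simp [h0]
      rw [this, hEI]
    · simp only [hln, if_false]
      have hne : ((l, k) : Fin L × Fin D) ≠ (n, k) := by
        simp [Prod.ext_iff, hln]
      have hind0 := hIndepI.indepFun hne
      have hind : IndepFun (fun ω => I j l k ω) (fun ω => I j n k ω) μ :=
        hind0.comp (measurable_pi_apply j) (measurable_pi_apply j)
      have := hind.integral_mul_eq_mul_integral ((hImeas j l k)).aestronglyMeasurable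
        ((hImeas j n k)).aestronglyMeasurable
      simpa [Pi.mul_apply, hEI] using this
  -- the main second-moment computation
  have hak : ∀ (l n : Fin L) (k : Fin D),
      ∫ ω, a l k ω * a n k ω ∂μ = if l = n then 1 else ∑ j, p j l * p j n := by
    intro l n k
    have hexp : (fun ω => a l k ω * a n k ω)
        = fun ω => ∑ i, ∑ j, I i l k ω * I j n k ω * (h i k ω * h j k ω) := by
      funext ω
      rw [ha, ha, Finset.sum_mul_sum]
      refine Finset.sum_congr rfl fun i _ => Finset.sum_congr rfl fun j _ => by ring
    rw [hexp, integral_finset_sum _ fun i _ => integrable_finset_sum _ fun j _ => hint i j l n k]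
    have : ∀ i ∈ Finset.univ, ∫ ω, ∑ j, I i l k ω * I j n k ω * (h i k ω * h j k ω) ∂μ
        = ∫ ω, I i l k ω * I i n k ω * (h i k ω * h i k ω) ∂μ := by
      intro i _
      rw [integral_finset_sum _ fun j _ => hint i j l n k]
      rw [Finset.sum_eq_single i]
      · intro j _ hji
        rw [key1 i j l n k, hcorr]
        simp [Ne.symm hji]
      · simp
    rw [Finset.sum_congr rfl this]
    have hterm : ∀ i : Fin J, ∫ ω, I i l k ω * I i n k ω * (h i k ω * h i k ω) ∂μ
        = if l = n then p i l else p i l * p i n := by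
      intro i
      rw [key1 i i l n k, hcorr, keyII]
      simp
    rw [Finset.sum_congr rfl fun i _ => hterm i]
    by_cases hln : l = n
    · simp [hln, hp1]
    · simp [hln]
  -- conclude
  ext l n
  have haint : ∀ k : Fin D, Integrable (fun ω => a l k ω * a n k ω) μ := by
    intro k
    have hexp : (fun ω => a l k ω * a n k ω)
        = fun ω => ∑ i, ∑ j, I i l k ω * I j n k ω * (h i k ω * h j k ω) := by
      funext ω
      rw [ha, ha, Finset.sum_mul_sum]
      refine Finset.sum_congr rfl fun i _ => Finset.sum_congr rfl fun j _ => by ring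
    rw [hexp]
    exact integrable_finset_sum _ fun i _ => integrable_finset_sum _ fun j _ => hint i j l n k
  have hWln : W l n = if l = n then 1 else ∑ j, p j l * p j n := by
    rw [hW, integral_const_mul, integral_finset_sum _ fun k _ => haint k,
      Finset.sum_congr rfl fun k _ => hak l n k]
    simp only [Finset.sum_const, Finset.card_univ, Fintype.card_fin, nsmul_eq_mul]
    field_simp
  rw [hWln]
  simp only [Matrix.add_apply, Matrix.mul_apply, Matrix.transpose_apply, Matrix.diagonal_apply, hP]
  by_cases hln : l = n
  · subst hln
    simp only [if_true]
    have : ∑ j, p j l * p j l = ∑ j, p j l ^ 2 := by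
      refine Finset.sum_congr rfl fun j _ => by ring
    rw [this]; ring
  · simp [hln]
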